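/- Let M_{t_n}(X,Y) = ∑_{a ≤ b in P_{t_n}} μ(a,b) X^{ht(a)} Y^{ht(b)} ∈ ℤ[X,Y]. Then in the ring of formal power series in s over ℤ[X,Y] one has the identity (1 + ∑_{n ≥ 1} M_{t_n}(X,Y) s^n) · (2XYs - Ys - 1) · (XYs - Ys + s - 1) = (XYs - Ys - 1) · (XYs - 1). -/

import Mathlib

open MvPolynomial

/-- The poset `P_{t_n}`: lattice points `a ∈ ℕ^n` with `a i ≤ 1` for the first
`n - 1` coordinates and total coordinate sum at most `n`, ordered coordinatewise. -/
def Ptn (n : ℕ) : Set (Fin n → ℕ) :=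
  {a | (∀ i : Fin n, (i : ℕ) < n - 1 → a i ≤ 1) ∧ ∑ i, a i ≤ n}

/-- The variable `X` of `ℤ[X,Y]` (realized as `MvPolynomial (Fin 2) ℤ`). -/
noncomputable def Xv : MvPolynomial (Fin 2) ℤ := MvPolynomial.X 0

/-- The variable `Y` of `ℤ[X,Y]`. -/
noncomputable def Yv : MvPolynomial (Fin 2) ℤ := MvPolynomial.X 1

/-- `X` viewed as a constant power series in `s` over `ℤ[X,Y]`. -/
noncomputable def CX : PowerSeries (MvPolynomial (Fin 2) ℤ) :=
  PowerSeries.C Xv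

/-- `Y` viewed as a constant power series in `s` over `ℤ[X,Y]`. -/
noncomputable def CY : PowerSeries (MvPolynomial (Fin 2) ℤ) :=
  PowerSeries.C Yv

/-- The power series variable `s`. -/
noncomputable def S : PowerSeries (MvPolynomial (Fin 2) ℤ) := PowerSeries.X

namespace Stmt6Aux
open Finset
open scoped Classical

noncomputable section

abbrev R2 := MvPolynomial (Fin 2) ℤ

def uu : R2 := Xv * Yv - Yv
def ww : R2 := Xv * Yv

def f0 (x y : ℕ) : ℤ := if y = x then 1 else if y = x + 1 then -1 else 0

def Hh (m : ℕ) : R2 := if m = 0 then 1 else uu * ww ^ (m - 1)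

lemma sum_f0_Icc {x y : ℕ} (h : x ≤ y) :
    ∑ d ∈ Icc x y, f0 x d = if y = x then 1 else 0 := by
  induction y, h using Nat.le_induction with
  | base => simp [f0]
  | succ y hxy ih =>
      rw [Finset.sum_Icc_succ_top (by omega), ih]
      rcases eq_or_lt_of_le hxy with rfl | h
      · simp [f0]
      · have h1 : f0 x (y + 1) = 0 := by
          simp only [f0]; rw [if_neg (by omega), if_neg (by omega)]
        rw [if_neg (by omega), if_neg (by omega), h1, add_zero]

def PtnF (n : ℕ) : Finset (Fin n → ℕ) :=
  (Fintype.piFinset fun _ : Fin n => Finset.range (n + 1)).filter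
    (fun a => (∀ i : Fin n, (i : ℕ) < n - 1 → a i ≤ 1) ∧ ∑ i, a i ≤ n)

lemma mem_PtnF {n : ℕ} {a : Fin n → ℕ} : a ∈ PtnF n ↔ a ∈ Ptn n := by
  simp only [PtnF, Finset.mem_filter, Fintype.mem_piFinset, Finset.mem_range, Ptn,
    Set.mem_setOf_eq, Nat.lt_succ_iff]
  constructor
  · rintro ⟨-, h⟩; exact h
  · rintro ⟨h1, h2⟩
    exact ⟨fun i => le_trans (Finset.single_le_sum (fun j _ => Nat.zero_le _) (mem_univ i)) h2,
      h1, h2⟩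

lemma coe_PtnF (n : ℕ) : (↑(PtnF n) : Set (Fin n → ℕ)) = Ptn n :=
  Set.ext fun _ => mem_PtnF

lemma Ptn_mono {n : ℕ} {a b : Fin n → ℕ} (hb : b ∈ Ptn n) (hab : a ≤ b) : a ∈ Ptn n :=
  ⟨fun i hi => le_trans (hab i) (hb.1 i hi),
    le_trans (Finset.sum_le_sum fun i _ => hab i) hb.2⟩

lemma sum_lt_of_lt {n : ℕ} {a b : Fin n → ℕ} (h : a < b) : ∑ i, a i < ∑ i, b i := by
  obtain ⟨hle, hne⟩ := lt_iff_le_and_ne.mp h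
  obtain ⟨i, hi⟩ : ∃ i, a i ≠ b i := Function.ne_iff.mp hne
  exact Finset.sum_lt_sum (fun j _ => hle j) ⟨i, mem_univ i, lt_of_le_of_ne (hle i) hi⟩

lemma muEq (mu : (n : ℕ) → (Fin n → ℕ) → (Fin n → ℕ) → ℤ)
    (hrefl : ∀ n : ℕ, ∀ a ∈ Ptn n, mu n a a = 1)
    (hrec : ∀ n : ℕ, ∀ a ∈ Ptn n, ∀ b ∈ Ptn n, a < b →
      mu n a b = -∑ᶠ e ∈ {e | e ∈ Ptn n ∧ a ≤ e ∧ e < b}, mu n a e)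
    (n : ℕ) :
    ∀ (N : ℕ) (b : Fin n → ℕ), (∑ i, b i) ≤ N → b ∈ Ptn n → ∀ a, a ∈ Ptn n → a ≤ b →
      mu n a b = ∏ i, f0 (a i) (b i) := by
  intro N
  induction N with
  | zero =>
      intro b hbN hb a ha hab
      have hb0 : ∀ i, b i = 0 := by
        intro i
        have := Finset.single_le_sum (f := b) (fun j _ => Nat.zero_le _) (mem_univ i)
        omega
      have hab' : a = b := funext fun i => le_antisymm (by simpa [hb0 i] using hab i) (by simp [hb0 i])
      subst hab'
      rw [hrefl n a ha]
      simp [f0]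
  | succ N ih =>
      intro b hbN hb a ha hab
      rcases eq_or_lt_of_le hab with rfl | hlt
      · rw [hrefl n a ha]; simp [f0]
      · rw [hrec n a ha b hb hlt]
        set box : Finset (Fin n → ℕ) := Fintype.piFinset fun i => Icc (a i) (b i) with hbox
        have hmem : ∀ {e}, e ∈ box ↔ (∀ i, a i ≤ e i ∧ e i ≤ b i) := by
          intro e; simp [hbox, Fintype.mem_piFinset, Finset.mem_Icc]
        have hbmem : b ∈ box := hmem.mpr fun i => ⟨hab i, le_rfl⟩
        have hset : {e | e ∈ Ptn n ∧ a ≤ e ∧ e < b} = ↑(box.erase b) := by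
          ext e
          simp only [Set.mem_setOf_eq, Finset.coe_erase, Set.mem_diff, Finset.mem_coe,
            Set.mem_singleton_iff, hmem]
          constructor
          · rintro ⟨hP, hae, heb⟩
            exact ⟨fun i => ⟨hae i, (le_of_lt heb) i⟩, ne_of_lt heb⟩
          · rintro ⟨hbounds, hne⟩
            have hle : e ≤ b := fun i => (hbounds i).2
            exact ⟨Ptn_mono hb hle, fun i => (hbounds i).1, lt_of_le_of_ne hle hne⟩
        rw [hset, finsum_mem_coe_finset]
        have hrw : ∀ e ∈ box.erase b, mu n a e = ∏ i, f0 (a i) (e i) := by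
          intro e he
          rw [Finset.mem_erase] at he
          have hle : e ≤ b := fun i => (hmem.mp he.2 i).2
          have hltb : e < b := lt_of_le_of_ne hle he.1
          have : ∑ i, e i ≤ N := by
            have := sum_lt_of_lt hltb; omega
          exact ih e this (Ptn_mono hb hle) a ha fun i => (hmem.mp he.2 i).1
        rw [Finset.sum_congr rfl hrw]
        have hbig : ∑ e ∈ box, ∏ i, f0 (a i) (e i) = 0 := by
          rw [← Finset.prod_univ_sum (fun i => Icc (a i) (b i)) (fun i d => f0 (a i) d)]
          obtain ⟨i, hi⟩ : ∃ i, a i ≠ b i := Function.ne_iff.mp (ne_of_lt hlt)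
          refine Finset.prod_eq_zero (mem_univ i) ?_
          rw [sum_f0_Icc (hab i), if_neg (Ne.symm hi)]
        have := Finset.sum_erase_add box (fun e => ∏ i, f0 (a i) (e i)) hbmem
        have h2 : ∑ e ∈ box.erase b, ∏ i, f0 (a i) (e i) = - ∏ i, f0 (a i) (b i) := by
          linarith [this, hbig]
        rw [h2, neg_neg]

-- per-coordinate sum over the `a` variable
lemma sum_coord (m : ℕ) :
    ∑ d ∈ range (m + 1), (C (f0 d m) * Xv ^ d) =
      Xv ^ m - (if m = 0 then 0 else Xv ^ (m - 1)) := by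
  cases m with
  | zero => simp [f0]
  | succ k =>
      rw [Finset.sum_range_succ, Finset.sum_range_succ]
      have h1 : ∑ d ∈ range k, (C (f0 d (k+1)) * Xv ^ d) = 0 := by
        refine Finset.sum_eq_zero fun d hd => ?_
        rw [Finset.mem_range] at hd
        have : f0 d (k+1) = 0 := by
          simp only [f0]; rw [if_neg (by omega), if_neg (by omega)]
        simp [this]
      have h2 : f0 k (k+1) = -1 := by simp only [f0]; rw [if_neg (by omega)]; simp
      have h3 : f0 (k+1) (k+1) = 1 := by simp [f0]
      rw [h1, h2, h3, if_neg (by omega), Nat.add_sub_cancel]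
      simp only [map_neg, map_one]
      ring

lemma coordH (m : ℕ) :
    Yv ^ m * (Xv ^ m - (if m = 0 then 0 else Xv ^ (m - 1))) = Hh m := by
  cases m with
  | zero => simp [Hh]
  | succ k =>
      simp only [Hh, if_neg (Nat.succ_ne_zero k), Nat.add_sub_cancel, uu, ww]
      ring

lemma sum_Hh (N : ℕ) :
    (ww - 1) * ∑ m ∈ range (N + 1), Hh m = (ww - 1 - uu) + uu * ww ^ N := by
  induction N with
  | zero => simp [Hh]
  | succ N ih =>
      rw [Finset.sum_range_succ, mul_add, ih]
      have : Hh (N+1) = uu * ww ^ N := by simp [Hh]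
      rw [this]; ring

lemma sum_pow_uu (m : ℕ) :
    ∑ p ∈ Fintype.piFinset (fun _ : Fin m => range 2), ∏ i, uu ^ (p i) = (1 + uu) ^ m := by
  rw [← Finset.prod_univ_sum]
  simp [Finset.sum_range_succ]

lemma sum_pow_uw (m : ℕ) :
    ∑ p ∈ Fintype.piFinset (fun _ : Fin m => range 2),
      ∏ i, (uu ^ (p i) * ww ^ (1 - p i)) = (uu + ww) ^ m := by
  rw [← Finset.prod_univ_sum (fun _ : Fin m => range 2) (fun _ d => uu ^ d * ww ^ (1 - d))]
  have : ∀ _i : Fin m, ∑ x ∈ range 2, uu ^ x * ww ^ (1 - x) = uu + ww := by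
    intro i; rw [Finset.sum_range_succ, Finset.sum_range_one]; simp [add_comm]
  rw [Finset.prod_congr rfl (fun i _ => this i)]
  simp

lemma inner_sum {n : ℕ} {b : Fin n → ℕ} (hb : b ∈ Ptn n) :
    ∑ a ∈ (PtnF n).filter (· ≤ b),
        (C (∏ i, f0 (a i) (b i)) * (Xv ^ (∑ i, a i) * Yv ^ (∑ i, b i)))
      = ∏ i, Hh (b i) := by
  have hset : (PtnF n).filter (· ≤ b) = Fintype.piFinset (fun i => range (b i + 1)) := by
    ext a
    simp only [Finset.mem_filter, Fintype.mem_piFinset, Finset.mem_range, Nat.lt_succ_iff,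
      mem_PtnF]
    constructor
    · rintro ⟨-, h⟩; exact h
    · intro h; exact ⟨Ptn_mono hb h, h⟩
  rw [hset]
  have hterm : ∀ a : Fin n → ℕ,
      C (∏ i, f0 (a i) (b i)) * (Xv ^ (∑ i, a i) * Yv ^ (∑ i, b i))
        = (∏ i, (C (f0 (a i) (b i)) * Xv ^ (a i))) * Yv ^ (∑ i, b i) := by
    intro a
    rw [Finset.prod_mul_distrib, map_prod, Finset.prod_pow_eq_pow_sum, mul_assoc]
  simp only [hterm]
  rw [← Finset.sum_mul, ← Finset.prod_univ_sum (fun i => range (b i + 1))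
    (fun i d => C (f0 d (b i)) * Xv ^ d)]
  rw [← Finset.prod_pow_eq_pow_sum Finset.univ b Yv, ← Finset.prod_mul_distrib]
  exact Finset.prod_congr rfl fun i _ => by rw [sum_coord, mul_comm, coordH]

lemma sum_p_le {n' : ℕ} {p : Fin n' → ℕ}
    (hp : p ∈ Fintype.piFinset (fun _ : Fin n' => range 2)) : ∑ j, p j ≤ n' := by
  rw [Fintype.mem_piFinset] at hp
  calc ∑ j, p j ≤ ∑ _j : Fin n', 1 :=
        Finset.sum_le_sum fun j _ => by have := hp j; rw [Finset.mem_range] at this; omega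
    _ = n' := by simp

lemma sum_PtnF_Hh (n' : ℕ) :
    ∑ b ∈ PtnF (n' + 1), ∏ i, Hh (b i)
      = ∑ p ∈ Fintype.piFinset (fun _ : Fin n' => range 2),
          (∏ i, Hh (p i)) * ∑ m ∈ range (n' + 1 - ∑ i, p i + 1), Hh m := by
  have hrhs : ∀ p : Fin n' → ℕ,
      (∏ i, Hh (p i)) * ∑ m ∈ range (n' + 1 - ∑ i, p i + 1), Hh m
        = ∑ m ∈ range (n' + 1 - ∑ i, p i + 1), (∏ i, Hh (p i)) * Hh m :=
    fun p => Finset.mul_sum _ _ _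
  simp only [hrhs]
  rw [← Finset.sum_sigma (Fintype.piFinset (fun _ : Fin n' => range 2))
    (fun p => range (n' + 1 - ∑ i, p i + 1))
    (fun x => (∏ i, Hh (x.1 i)) * Hh x.2)]
  refine Finset.sum_bij' (fun b _ => ⟨Fin.init b, b (Fin.last n')⟩)
    (fun x _ => Fin.snoc x.1 x.2) ?_ ?_ ?_ ?_ ?_
  · intro b hb
    rw [mem_PtnF] at hb
    obtain ⟨h1, h2⟩ := hb
    rw [Finset.mem_sigma]
    constructor
    · rw [Fintype.mem_piFinset]
      intro j
      rw [Finset.mem_range]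
      have := h1 (Fin.castSucc j) (by simp)
      simp only [Fin.init]
      omega
    · rw [Finset.mem_range]
      show b (Fin.last n') < n' + 1 - (∑ j, Fin.init b j) + 1
      have hsum : ∑ i, b i = ∑ j : Fin n', Fin.init b j + b (Fin.last n') := by
        rw [Fin.sum_univ_castSucc]; rfl
      omega
  · rintro ⟨p, m⟩ hx
    dsimp only
    rw [Finset.mem_sigma, Fintype.mem_piFinset] at hx
    dsimp only at hx
    obtain ⟨hp, hm⟩ := hx
    rw [Finset.mem_range] at hm
    have hple : ∑ j, p j ≤ n' := sum_p_le (by rw [Fintype.mem_piFinset]; exact hp)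
    rw [mem_PtnF]
    constructor
    · intro i hi
      simp only [Nat.add_sub_cancel] at hi
      have : i = Fin.castSucc ⟨(i : ℕ), hi⟩ := by
        apply Fin.ext; simp
      rw [this, Fin.snoc_castSucc]
      have := hp ⟨(i : ℕ), hi⟩
      rw [Finset.mem_range] at this
      omega
    · have hsum : ∑ i, Fin.snoc p m i = ∑ j, p j + m := by
        rw [Fin.sum_univ_castSucc]
        simp [Fin.snoc_castSucc, Fin.snoc_last]
      rw [hsum]; omega
  · intro b _
    exact Fin.snoc_init_self b
  · rintro ⟨p, m⟩ _
    simp [Fin.init_snoc, Fin.snoc_last]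
  · intro b _
    rw [Fin.prod_univ_castSucc]
    rfl

lemma key (n' : ℕ) :
    (ww - 1) * ∑ b ∈ PtnF (n' + 1), ∏ i, Hh (b i)
      = (ww - 1 - uu) * (1 + uu) ^ n' + uu * ww * (uu + ww) ^ n' := by
  rw [sum_PtnF_Hh, Finset.mul_sum]
  have hterm : ∀ p ∈ Fintype.piFinset (fun _ : Fin n' => range 2),
      (ww - 1) * ((∏ i, Hh (p i)) * ∑ m ∈ range (n' + 1 - ∑ i, p i + 1), Hh m)
        = (ww - 1 - uu) * ∏ i, uu ^ (p i)
          + uu * ww * ∏ i, (uu ^ (p i) * ww ^ (1 - p i)) := by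
    intro p hp
    have hple : ∑ j, p j ≤ n' := sum_p_le hp
    rw [Fintype.mem_piFinset] at hp
    have hp1 : ∀ i, p i ≤ 1 := fun i => by have := hp i; rw [Finset.mem_range] at this; omega
    have hHp : ∀ i, Hh (p i) = uu ^ (p i) := by
      intro i
      rcases Nat.le_one_iff_eq_zero_or_eq_one.mp (hp1 i) with h | h <;> simp [h, Hh]
    have hcompl : ∑ i, (1 - p i) = n' - ∑ i, p i := by
      have : ∑ i, ((1 - p i) + p i) = (n' : ℕ) := by
        rw [Finset.sum_congr rfl (fun i _ => by have := hp1 i; omega : ∀ i ∈ univ, (1 - p i) + p i = 1)]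
        simp
      rw [Finset.sum_add_distrib] at this
      omega
    have hsplit : ∏ i, (uu ^ (p i) * ww ^ (1 - p i))
        = (∏ i, uu ^ (p i)) * ww ^ (n' - ∑ i, p i) := by
      rw [Finset.prod_mul_distrib]
      congr 1
      rw [Finset.prod_pow_eq_pow_sum, hcompl]
    have hexp : n' + 1 - ∑ i, p i = (n' - ∑ i, p i) + 1 := by omega
    calc (ww - 1) * ((∏ i, Hh (p i)) * ∑ m ∈ range (n' + 1 - ∑ i, p i + 1), Hh m)
        = (∏ i, Hh (p i)) * ((ww - 1) * ∑ m ∈ range (n' + 1 - ∑ i, p i + 1), Hh m) := by ring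
      _ = (∏ i, uu ^ (p i)) * ((ww - 1 - uu) + uu * ww ^ (n' + 1 - ∑ i, p i)) := by
          rw [sum_Hh, Finset.prod_congr rfl fun i _ => hHp i]
      _ = (ww - 1 - uu) * ∏ i, uu ^ (p i)
          + uu * ww * ((∏ i, uu ^ (p i)) * ww ^ (n' - ∑ i, p i)) := by
          rw [hexp, pow_succ]; ring
      _ = _ := by rw [hsplit]
  rw [Finset.sum_congr rfl hterm, Finset.sum_add_distrib, ← Finset.mul_sum, ← Finset.mul_sum,
    sum_pow_uu, sum_pow_uw]

lemma Mval (mu : (n : ℕ) → (Fin n → ℕ) → (Fin n → ℕ) → ℤ)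
    (hrefl : ∀ n : ℕ, ∀ a ∈ Ptn n, mu n a a = 1)
    (hrec : ∀ n : ℕ, ∀ a ∈ Ptn n, ∀ b ∈ Ptn n, a < b →
      mu n a b = -∑ᶠ e ∈ {e | e ∈ Ptn n ∧ a ≤ e ∧ e < b}, mu n a e)
    (n : ℕ) :
    (∑ᶠ a ∈ Ptn n, ∑ᶠ b ∈ {b | b ∈ Ptn n ∧ a ≤ b},
        C (mu n a b) * (Xv ^ (∑ i, a i) * Yv ^ (∑ i, b i)))
      = ∑ b ∈ PtnF n, ∏ i, Hh (b i) := by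
  have step1 : ∀ a ∈ Ptn n,
      (∑ᶠ b ∈ {b | b ∈ Ptn n ∧ a ≤ b},
          C (mu n a b) * (Xv ^ (∑ i, a i) * Yv ^ (∑ i, b i)))
        = ∑ b ∈ (PtnF n).filter (a ≤ ·),
            C (∏ i, f0 (a i) (b i)) * (Xv ^ (∑ i, a i) * Yv ^ (∑ i, b i)) := by
    intro a ha
    have hset : {b | b ∈ Ptn n ∧ a ≤ b} = ↑((PtnF n).filter (a ≤ ·)) := by
      ext b
      simp only [Set.mem_setOf_eq, Finset.coe_filter, mem_PtnF]
    rw [hset, finsum_mem_coe_finset]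
    refine Finset.sum_congr rfl fun b hb => ?_
    rw [Finset.mem_filter, mem_PtnF] at hb
    rw [muEq mu hrefl hrec n (∑ i, b i) b le_rfl hb.1 a ha hb.2]
  rw [finsum_mem_congr (coe_PtnF n).symm
      (fun a ha => step1 a (by rwa [Finset.mem_coe, mem_PtnF] at ha)),
    finsum_mem_coe_finset]
  have hswap :
      (∑ a ∈ PtnF n, ∑ b ∈ (PtnF n).filter (a ≤ ·),
          C (∏ i, f0 (a i) (b i)) * (Xv ^ (∑ i, a i) * Yv ^ (∑ i, b i)))
        = ∑ b ∈ PtnF n, ∑ a ∈ (PtnF n).filter (· ≤ b),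
            C (∏ i, f0 (a i) (b i)) * (Xv ^ (∑ i, a i) * Yv ^ (∑ i, b i)) := by
    simp only [Finset.sum_filter]
    exact Finset.sum_comm
  rw [hswap]
  refine Finset.sum_congr rfl fun b hb => ?_
  exact inner_sum (mem_PtnF.mp hb)

def G1 : PowerSeries R2 := PowerSeries.mk fun n => (uu + ww) ^ n
def G2 : PowerSeries R2 := PowerSeries.mk fun n => (1 + uu) ^ n

lemma geom (g : R2) :
    (1 - PowerSeries.C g * PowerSeries.X) * PowerSeries.mk (fun n => g ^ n) = 1 := by
  ext n
  rw [sub_mul, one_mul, map_sub, mul_assoc]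
  cases n with
  | zero =>
      rw [PowerSeries.coeff_mk]
      rw [PowerSeries.coeff_zero_eq_constantCoeff, map_mul, map_mul]
      simp
  | succ k =>
      rw [PowerSeries.coeff_mk, PowerSeries.coeff_C_mul, PowerSeries.coeff_succ_X_mul,
        PowerSeries.coeff_mk, PowerSeries.coeff_one, if_neg (Nat.succ_ne_zero k)]
      rw [pow_succ]
      ring_nf

lemma decomp (F : PowerSeries R2) (hF0 : PowerSeries.coeff 0 F = 1)
    (hM : ∀ k : ℕ, (ww - 1) * PowerSeries.coeff (k + 1) F
        = (ww - 1 - uu) * (1 + uu) ^ k + uu * ww * (uu + ww) ^ k) :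
    PowerSeries.C (ww - 1) * F
      = PowerSeries.C (ww - 1)
        + PowerSeries.C (ww - 1 - uu) * (PowerSeries.X * G2)
        + PowerSeries.C (uu * ww) * (PowerSeries.X * G1) := by
  ext n
  rw [map_add, map_add, PowerSeries.coeff_C_mul, PowerSeries.coeff_C_mul,
    PowerSeries.coeff_C_mul]
  cases n with
  | zero =>
      rw [hF0, PowerSeries.coeff_zero_eq_constantCoeff]
      simp [G1, G2]
  | succ k =>
      rw [hM k, PowerSeries.coeff_succ_X_mul, PowerSeries.coeff_succ_X_mul,
        PowerSeries.coeff_C, if_neg (Nat.succ_ne_zero k), G1, G2,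
        PowerSeries.coeff_mk, PowerSeries.coeff_mk]
      ring

lemma hCne : (PowerSeries.C (ww - 1)) ≠ 0 := by
  intro h
  have h1 := congrArg (PowerSeries.constantCoeff) h
  rw [PowerSeries.constantCoeff_C, map_zero] at h1
  have h2 := congrArg (MvPolynomial.constantCoeff) h1
  simp [ww, Xv, Yv] at h2

end
end Stmt6Aux


/-- Let `mu n` be the Möbius function of the finite poset `P_{t_n}` and let
`M_{t_n}(X,Y) = ∑_{a ≤ b in P_{t_n}} mu(a,b) X^{ht(a)} Y^{ht(b)} ∈ ℤ[X,Y]`. Then in the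
ring of formal power series in `s` over `ℤ[X,Y]` one has
`(1 + ∑_{n ≥ 1} M_{t_n}(X,Y) sⁿ)(2XYs - Ys - 1)(XYs - Ys + s - 1) = (XYs - Ys - 1)(XYs - 1)`,
where `1 + ∑_{n ≥ 1} M_{t_n} sⁿ` is the power series with constant coefficient `1` and
`n`-th coefficient `M_{t_n}(X,Y)` for `n ≥ 1`. -/
theorem stmt6
    (mu : (n : ℕ) → (Fin n → ℕ) → (Fin n → ℕ) → ℤ)
    (hrefl : ∀ n : ℕ, ∀ a ∈ Ptn n, mu n a a = 1)
    (hrec : ∀ n : ℕ, ∀ a ∈ Ptn n, ∀ b ∈ Ptn n, a < b →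
      mu n a b = -∑ᶠ e ∈ {e | e ∈ Ptn n ∧ a ≤ e ∧ e < b}, mu n a e) :
    (PowerSeries.mk fun n => if n = 0 then 1 else
        ∑ᶠ a ∈ Ptn n, ∑ᶠ b ∈ {b | b ∈ Ptn n ∧ a ≤ b},
          MvPolynomial.C (mu n a b) * (Xv ^ (∑ i, a i) * Yv ^ (∑ i, b i))) *
      (2 * CX * CY * S - CY * S - 1) * (CX * CY * S - CY * S + S - 1) =
      (CX * CY * S - CY * S - 1) * (CX * CY * S - 1) := by
  open Stmt6Aux in
  set R2 := MvPolynomial (Fin 2) ℤ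
  set F : PowerSeries R2 := PowerSeries.mk fun n => if n = 0 then 1 else
        ∑ᶠ a ∈ Ptn n, ∑ᶠ b ∈ {b | b ∈ Ptn n ∧ a ≤ b},
          MvPolynomial.C (mu n a b) * (Xv ^ (∑ i, a i) * Yv ^ (∑ i, b i)) with hF
  have hF0 : PowerSeries.coeff 0 F = 1 := by
    rw [hF, PowerSeries.coeff_mk, if_pos rfl]
  have hM : ∀ k : ℕ, (Stmt6Aux.ww - 1) * PowerSeries.coeff (k + 1) F
      = (Stmt6Aux.ww - 1 - Stmt6Aux.uu) * (1 + Stmt6Aux.uu) ^ k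
        + Stmt6Aux.uu * Stmt6Aux.ww * (Stmt6Aux.uu + Stmt6Aux.ww) ^ k := by
    intro k
    rw [hF, PowerSeries.coeff_mk, if_neg (Nat.succ_ne_zero k),
      Stmt6Aux.Mval mu hrefl hrec (k + 1), Stmt6Aux.key k]
  have hdec := Stmt6Aux.decomp F hF0 hM
  have e1 : 2 * CX * CY * S - CY * S - 1
      = -(1 - PowerSeries.C (Stmt6Aux.uu + Stmt6Aux.ww) * PowerSeries.X) := by
    simp only [Stmt6Aux.uu, Stmt6Aux.ww, map_add, map_sub, map_mul, CX, CY, S]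
    ring
  have e2 : CX * CY * S - CY * S + S - 1
      = -(1 - PowerSeries.C (1 + Stmt6Aux.uu) * PowerSeries.X) := by
    simp only [Stmt6Aux.uu, map_add, map_sub, map_mul, map_one, CX, CY, S]
    ring
  have e3 : CX * CY * S - CY * S - 1
      = -(1 - PowerSeries.C Stmt6Aux.uu * PowerSeries.X) := by
    simp only [Stmt6Aux.uu, map_sub, map_mul, CX, CY, S]
    ring
  have e4 : CX * CY * S - 1 = -(1 - PowerSeries.C Stmt6Aux.ww * PowerSeries.X) := by
    simp only [Stmt6Aux.ww, map_mul, CX, CY, S]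
    ring
  rw [e1, e2, e3, e4]
  have hg1 : (1 - PowerSeries.C (Stmt6Aux.uu + Stmt6Aux.ww) * PowerSeries.X)
      * Stmt6Aux.G1 = 1 := Stmt6Aux.geom _
  have hg2 : (1 - PowerSeries.C (1 + Stmt6Aux.uu) * PowerSeries.X)
      * Stmt6Aux.G2 = 1 := Stmt6Aux.geom _
  have main : F * ((1 - PowerSeries.C (Stmt6Aux.uu + Stmt6Aux.ww) * PowerSeries.X)
        * (1 - PowerSeries.C (1 + Stmt6Aux.uu) * PowerSeries.X))
      = (1 - PowerSeries.C Stmt6Aux.uu * PowerSeries.X)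
        * (1 - PowerSeries.C Stmt6Aux.ww * PowerSeries.X) := by
    apply mul_left_cancel₀ Stmt6Aux.hCne
    have lhs_eq : PowerSeries.C (Stmt6Aux.ww - 1)
        * (F * ((1 - PowerSeries.C (Stmt6Aux.uu + Stmt6Aux.ww) * PowerSeries.X)
          * (1 - PowerSeries.C (1 + Stmt6Aux.uu) * PowerSeries.X)))
        = (PowerSeries.C (Stmt6Aux.ww - 1) * F)
          * ((1 - PowerSeries.C (Stmt6Aux.uu + Stmt6Aux.ww) * PowerSeries.X)
          * (1 - PowerSeries.C (1 + Stmt6Aux.uu) * PowerSeries.X)) := by ring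
    rw [lhs_eq, hdec]
    simp only [map_add, map_sub, map_mul, map_one] at hg1 hg2 ⊢
    linear_combination
      ((PowerSeries.C Stmt6Aux.ww - 1 - PowerSeries.C Stmt6Aux.uu) * PowerSeries.X
        * (1 - (PowerSeries.C Stmt6Aux.uu + PowerSeries.C Stmt6Aux.ww) * PowerSeries.X)) * hg2
      + (PowerSeries.C Stmt6Aux.uu * PowerSeries.C Stmt6Aux.ww * PowerSeries.X
        * (1 - (1 + PowerSeries.C Stmt6Aux.uu) * PowerSeries.X)) * hg1
  linear_combination main
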